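/- In any 2D type 1 graph, for every edge L shared by two faces with projections f and f', no two edges of the 1D intersection graph \bar{G}^f ∩ f' share a vertex (property P holds for 2D type 1 graphs). -/

import Mathlib

/-- A ribbon (fat) graph, encoded by its set of darts `D` together with the vertex
rotation permutation `σ` and the fixed-point-free edge involution `α`.  Vertices are the
orbits of `σ`, edges the orbits of `α`, and faces the orbits of `φ = σ ∘ α`. -/
structure Ribbon where
  D : Type
  [fin : Fintype D]
  [deq : DecidableEq D]
  σ : Equiv.Perm D
  α : Equiv.Perm D
  αfix : ∀ d, α d ≠ d
  αinv : ∀ d, α (α d) = d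

namespace Ribbon

variable (G : Ribbon)

instance : Fintype G.D := G.fin
instance : DecidableEq G.D := G.deq

/-- The face permutation of the ribbon graph. -/
def φ : Equiv.Perm G.D := G.σ * G.α

/-- Two darts lie on the same vertex. -/
def sameVertex : G.D → G.D → Prop := G.σ.SameCycle

/-- Two darts lie on the same face. -/
def sameFace : G.D → G.D → Prop := G.φ.SameCycle

/-- Two darts belong to the same edge. -/
def sameEdge (d e : G.D) : Prop := e = d ∨ e = G.α d

def vSetoid : Setoid G.D :=
  ⟨G.sameVertex, ⟨fun _ => Equiv.Perm.SameCycle.refl _ _,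
    Equiv.Perm.SameCycle.symm, Equiv.Perm.SameCycle.trans⟩⟩

def fSetoid : Setoid G.D :=
  ⟨G.sameFace, ⟨fun _ => Equiv.Perm.SameCycle.refl _ _,
    Equiv.Perm.SameCycle.symm, Equiv.Perm.SameCycle.trans⟩⟩

def eSetoid : Setoid G.D where
  r := G.sameEdge
  iseqv := by
    constructor
    · intro x; exact Or.inl rfl
    · intro x y h
      rcases h with h | h
      · exact Or.inl h.symm
      · subst h; exact Or.inr (G.αinv x).symm
    · intro x y z h1 h2
      rcases h1 with h1 | h1 <;> rcases h2 with h2 | h2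
      · subst h1; exact Or.inl h2
      · subst h1; exact Or.inr h2
      · subst h1; subst h2; exact Or.inr rfl
      · subst h1; subst h2; rw [G.αinv]; exact Or.inl rfl

/-- Number of vertices. -/
noncomputable def nV : ℕ := Nat.card (Quotient G.vSetoid)
/-- Number of edges. -/
noncomputable def nE : ℕ := Nat.card (Quotient G.eSetoid)
/-- Number of faces. -/
noncomputable def nF : ℕ := Nat.card (Quotient G.fSetoid)

/-- Euler characteristic `V - E + F` of the underlying closed orientable surface. -/
noncomputable def eulerChar : ℤ := (G.nV : ℤ) - G.nE + G.nF

/-- All vertices are trivalent. -/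
def Trivalent : Prop := ∀ d, G.σ d ≠ d ∧ G.σ (G.σ d) ≠ d ∧ G.σ (G.σ (G.σ d)) = d

/-- The ribbon graph is connected. -/
def Connected : Prop :=
  ∀ d e : G.D, Relation.ReflTransGen (fun a b => G.σ a = b ∨ G.α a = b) d e

/-- Planarity: genus zero, i.e. Euler characteristic `2`. -/
noncomputable def Planar : Prop := G.eulerChar = 2

/-- One-particle irreducibility (no bridges): any two darts can be joined by a path
avoiding any prescribed edge. -/
def OnePI : Prop :=
  ∀ d₀ a b : G.D,
    Relation.ReflTransGen (fun x y => G.σ x = y ∨ (G.α x = y ∧ ¬ G.sameEdge d₀ x)) a b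

/-- The faces of the graph. -/
def Face := Quotient G.fSetoid

noncomputable instance : Fintype G.Face := by
  classical exact Quotient.fintype G.fSetoid

/-- The face on which the dart `d` lies. -/
def faceOf (d : G.D) : G.Face := Quotient.mk G.fSetoid d

/-- The edge of the dart `d` borders the face `f` (with one of its two sides). -/
def borders (d : G.D) (f : G.Face) : Prop := G.faceOf d = f ∨ G.faceOf (G.α d) = f

/-- First type 1 condition: every 2D vertex/edge of the ancestor of a face projects to a
unique 1D vertex/edge of that face.  Equivalently: the faces around every vertex are
pairwise distinct, and each edge appears at most once on any given face boundary. -/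
def TypeOneI : Prop :=
  (∀ d e, G.sameVertex d e → G.sameFace d e → d = e) ∧ ∀ d, ¬ G.sameFace d (G.α d)

/-- The 1D intersection of (the cycle of) a face `f` with the union of the ancestor
graphs of the faces in `J`: the darts of `f` whose edge borders some face of `J`. -/
def interSet (f : G.Face) (J : Set G.Face) : Set G.D :=
  {x | G.faceOf x = f ∧ ∃ j ∈ J, G.borders x j}

/-- A subset of a face cycle is connected (an arc): any two of its members are joined by
steps of the face permutation staying inside the subset. -/
def ArcConnected (S : Set G.D) : Prop :=
  ∀ x ∈ S, ∀ y ∈ S,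
    Relation.ReflTransGen (fun a b => (G.φ a = b ∨ G.φ b = a) ∧ a ∈ S ∧ b ∈ S) x y

/-- Second type 1 condition: for every face `f₁` there is a total ordering
`f₁ < f₂ < … < f_n` of all faces such that the intersection of each `f_i` with the union
of the ancestors of the previous faces is nonempty and connected, and `f_i` is not
contained in that union (except possibly the last face). -/
def TypeOneII : Prop :=
  ∀ f₁ : G.Face, ∃ (n : ℕ) (ord : Fin n ≃ G.Face),
    (∀ h : 0 < n, ord ⟨0, h⟩ = f₁) ∧
    ∀ i : Fin n, 0 < i.1 →
      (G.interSet (ord i) {g | ∃ j, j < i ∧ ord j = g}).Nonempty ∧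
      G.ArcConnected (G.interSet (ord i) {g | ∃ j, j < i ∧ ord j = g}) ∧
      (i.1 + 1 < n →
        ∃ x, G.faceOf x = ord i ∧ x ∉ G.interSet (ord i) {g | ∃ j, j < i ∧ ord j = g})

/-- A 2D GFT graph is of type 1. -/
def TypeOne : Prop := G.TypeOneI ∧ G.TypeOneII

end Ribbon

namespace Ribbon

variable (G : Ribbon)

lemma faceOf_eq_iff {a b : G.D} : G.faceOf a = G.faceOf b ↔ G.sameFace a b := by
  unfold faceOf
  exact Quotient.eq

/-- The face of `σ d` equals the face of `α d`, since `φ (α d) = σ d`. -/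
lemma faceOf_sigma_eq {d : G.D} : G.faceOf (G.σ d) = G.faceOf (G.α d) := by
  rw [G.faceOf_eq_iff]
  refine (Equiv.Perm.SameCycle.symm ?_)
  refine ⟨1, ?_⟩
  simp only [zpow_one, φ, Equiv.Perm.mul_apply, G.αinv]

lemma sameVertex_pow {x : G.D} (n : ℕ) : G.sameVertex x ((G.σ ^ n) x) :=
  ⟨(n : ℤ), by simp [zpow_natCast]⟩

/-- Darts on the same vertex of a trivalent graph are in `{x, σ x, σ (σ x)}`. -/
lemma mem_triple_of_sameVertex (htri : G.Trivalent) {x y : G.D}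
    (h : G.sameVertex x y) : y = x ∨ y = G.σ x ∨ y = G.σ (G.σ x) := by
  obtain ⟨i, hi⟩ := h
  set S : Set G.D := {x, G.σ x, G.σ (G.σ x)} with hS
  have hfwd : ∀ z ∈ S, G.σ z ∈ S := by
    intro z hz
    rcases hz with h | h | h <;> rw [h]
    · exact Or.inr (Or.inl rfl)
    · exact Or.inr (Or.inr rfl)
    · exact Or.inl (htri x).2.2
  have hbwd : ∀ z ∈ S, G.σ⁻¹ z ∈ S := by
    have e1 : G.σ⁻¹ x = G.σ (G.σ x) :=
      G.σ.injective (by rw [← Equiv.Perm.mul_apply, mul_inv_cancel, Equiv.Perm.one_apply, (htri x).2.2])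
    intro z hz
    rcases hz with h | h | h <;> rw [h]
    · exact Or.inr (Or.inr e1)
    · exact Or.inl (G.σ.symm_apply_apply _)
    · exact Or.inr (Or.inl (G.σ.symm_apply_apply _))
  have key : ∀ j : ℤ, (G.σ ^ j) x ∈ S := by
    intro j
    induction j using Int.induction_on with
    | zero => simp [hS]
    | succ k ih =>
        have : (G.σ ^ ((k : ℤ) + 1)) x = G.σ ((G.σ ^ (k : ℤ)) x) := by
          rw [add_comm, zpow_add, zpow_one, Equiv.Perm.mul_apply]
        rw [this]; exact hfwd _ ih
    | pred k ih =>
        have : (G.σ ^ (-(k : ℤ) - 1)) x = G.σ⁻¹ ((G.σ ^ (-(k : ℤ))) x) := by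
          rw [sub_eq_add_neg, add_comm, zpow_add, zpow_neg, zpow_one,
            Equiv.Perm.mul_apply]
        rw [this]; exact hbwd _ ih
  have := key i
  rw [hi] at this
  rcases this with h | h | h
  · exact Or.inl h
  · exact Or.inr (Or.inl h)
  · exact Or.inr (Or.inr h)

lemma borders_of_sameEdge {d x : G.D} (h : G.sameEdge d x) {f : G.Face}
    (hb : G.borders d f) : G.borders x f := by
  rcases h with rfl | rfl
  · exact hb
  · rcases hb with hb | hb
    · exact Or.inr (by rwa [G.αinv])
    · exact Or.inl hb

/-- TypeOneI distinctness of faces around a trivalent vertex. -/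
lemma face_ne_of_ne (h1 : G.TypeOneI) {a b : G.D} (hv : G.sameVertex a b)
    (hab : a ≠ b) : G.faceOf a ≠ G.faceOf b := fun h =>
  hab (h1.1 a b hv (G.faceOf_eq_iff.mp h))

end Ribbon

/-- In any 2D type 1 graph (trivalent fat graph satisfying the type 1
conditions), property `P` holds: for any two distinct faces `f`, `f'`, no two distinct
edges that both border `f` and `f'` (i.e. belong to the 1D intersection `\bar{G}^f ∩ f'`)
share a vertex. -/
theorem twoD_type1_propertyP (G : Ribbon) (htri : G.Trivalent) (h1 : G.TypeOne)
    (d e : G.D) (hde : ¬ G.sameEdge d e) (f f' : G.Face) (hff : f ≠ f')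
    (hdf : G.borders d f) (hdf' : G.borders d f')
    (hef : G.borders e f) (hef' : G.borders e f') :
    ¬ ∃ x y : G.D, G.sameEdge d x ∧ G.sameEdge e y ∧ G.sameVertex x y := by
  rintro ⟨x, y, hdx, hey, hxy⟩
  obtain ⟨hI, hII⟩ := h1
  -- borders transferred to x and y
  have hxf : G.borders x f := G.borders_of_sameEdge hdx hdf
  have hxf' : G.borders x f' := G.borders_of_sameEdge hdx hdf'
  have hyf : G.borders y f := G.borders_of_sameEdge hey hef
  have hyf' : G.borders y f' := G.borders_of_sameEdge hey hef'
  -- notation for the three faces around the vertex of x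
  set F0 := G.faceOf x with hF0
  set F1 := G.faceOf (G.σ x) with hF1
  set F2 := G.faceOf (G.σ (G.σ x)) with hF2
  have hax : G.faceOf (G.α x) = F1 := (G.faceOf_sigma_eq).symm
  have hasx : G.faceOf (G.α (G.σ x)) = F2 := (G.faceOf_sigma_eq).symm
  have hσ3 : G.σ (G.σ (G.σ x)) = x := (htri x).2.2
  have hassx : G.faceOf (G.α (G.σ (G.σ x))) = F0 := by
    rw [← G.faceOf_sigma_eq, hσ3]
  -- pairwise distinct faces
  have hv01 : G.sameVertex x (G.σ x) := ⟨1, by simp⟩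
  have hv12 : G.sameVertex (G.σ x) (G.σ (G.σ x)) := ⟨1, by simp⟩
  have hv02 : G.sameVertex x (G.σ (G.σ x)) := ⟨2, by
    have : ((2 : ℤ)) = (2 : ℕ) := rfl
    rw [this, zpow_natCast]
    simp [pow_succ, Equiv.Perm.mul_apply]⟩
  have h01 : F0 ≠ F1 := G.face_ne_of_ne hI hv01 (Ne.symm (htri x).1)
  have h12 : F1 ≠ F2 := G.face_ne_of_ne hI hv12 (Ne.symm (htri (G.σ x)).1)
  have h02 : F0 ≠ F2 := G.face_ne_of_ne hI hv02 (Ne.symm (htri x).2.1)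
  -- determine which faces border x: {F0, F1} = {f, f'}
  have hxpair : (F0 = f ∧ F1 = f') ∨ (F0 = f' ∧ F1 = f) := by
    rcases hxf with h | h <;> rcases hxf' with h' | h'
    · exact absurd (h.symm.trans h') hff
    · exact Or.inl ⟨h, by rw [← hax]; exact h'⟩
    · exact Or.inr ⟨h', by rw [← hax]; exact h⟩
    · rw [hax] at h h'
      exact absurd (h.symm.trans h') hff
  -- y is one of x, σ x, σ (σ x)
  rcases G.mem_triple_of_sameVertex htri hxy with rfl | rfl | rfl
  · -- same dart : then d and e are on the same edge
    apply hde
    rcases hdx with rfl | rfl <;> rcases hey with h | h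
    · exact Or.inl h.symm
    · rw [← G.αinv e, ← h]; exact Or.inr rfl
    · rw [← h]; exact Or.inr rfl
    · have hd : d = e := by
        have := congrArg G.α h
        rwa [G.αinv, G.αinv] at this
      exact Or.inl hd.symm
  · -- y = σ x : faces bordering y are {F1, F2}
    have hypair : (F1 = f ∧ F2 = f') ∨ (F1 = f' ∧ F2 = f) := by
      rcases hyf with h | h <;> rcases hyf' with h' | h'
      · exact absurd (h.symm.trans h') hff
      · exact Or.inl ⟨h, by rw [← hasx]; exact h'⟩
      · exact Or.inr ⟨h', by rw [← hasx]; exact h⟩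
      · rw [hasx] at h h'
        exact absurd (h.symm.trans h') hff
    rcases hxpair with ⟨hx0, hx1⟩ | ⟨hx0, hx1⟩ <;>
      rcases hypair with ⟨hy1, hy2⟩ | ⟨hy1, hy2⟩
    · exact h01 (hx0.trans hy1.symm)
    · exact h02 (hx0.trans hy2.symm)
    · exact h02 (hx0.trans hy2.symm)
    · exact h01 (hx0.trans hy1.symm)
  · -- y = σ (σ x) : faces bordering y are {F2, F0}
    have hypair : (F2 = f ∧ F0 = f') ∨ (F2 = f' ∧ F0 = f) := by
      rcases hyf with h | h <;> rcases hyf' with h' | h'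
      · exact absurd (h.symm.trans h') hff
      · exact Or.inl ⟨h, by rw [← hassx]; exact h'⟩
      · exact Or.inr ⟨h', by rw [← hassx]; exact h⟩
      · rw [hassx] at h h'
        exact absurd (h.symm.trans h') hff
    rcases hxpair with ⟨hx0, hx1⟩ | ⟨hx0, hx1⟩ <;>
      rcases hypair with ⟨hy2, hy0⟩ | ⟨hy2, hy0⟩
    · exact h02 (hx0.trans hy2.symm)
    · exact h12 (hx1.trans hy2.symm)
    · exact h12 (hx1.trans hy2.symm)
    · exact h02 (hx0.trans hy2.symm)
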